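/- Let τ_0 = [(1,1),(1,1),(1,1),(1,1)] and ν_0 = [(2,1),(1,2)], both elements of RT_4, and let α : RT_4 → RT_4 be the permutation that interchanges τ_0 and ν_0 and fixes every other element of RT_4. Then α is a nontrivial automorphism of the partially ordered set (RT_4, ⪯): for all τ, μ ∈ RT_4, τ ⪯ μ if and only if α(τ) ⪯ α(μ). -/
import Mathlib


/-- `IsRT n τ` : `τ` is a representation type of total dimension `n`, i.e. a finite
multiset of pairs `(d, e)` of positive integers with `∑ d·e = n`. -/
def IsRT (n : ℕ) (τ : Multiset (ℕ × ℕ)) : Prop :=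
  (∀ p ∈ τ, 0 < p.1 ∧ 0 < p.2) ∧ (τ.map fun p => p.1 * p.2).sum = n

/-- `ElemRef τ τ'` : `τ'` is obtained from `τ` by a single elementary refinement:
either (1) replacing one pair `(d, e)` by `(a, e), (b, e)` with `a, b ≥ 1`, `a + b = d`,
or (2) replacing two pairs `(d, e), (d, e')` with the same first coordinate by the
single pair `(d, e + e')`. -/
def ElemRef (τ τ' : Multiset (ℕ × ℕ)) : Prop :=
  (∃ (σ : Multiset (ℕ × ℕ)) (d e a b : ℕ), 0 < a ∧ 0 < b ∧ a + b = d ∧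
      τ = (d, e) ::ₘ σ ∧ τ' = (a, e) ::ₘ (b, e) ::ₘ σ) ∨
  (∃ (σ : Multiset (ℕ × ℕ)) (d e e' : ℕ),
      τ = (d, e) ::ₘ (d, e') ::ₘ σ ∧ τ' = (d, e + e') ::ₘ σ)

/-- `RTle μ τ` (i.e. `μ ⪯ τ`) : `μ` is obtained from `τ` by a (possibly empty) finite
sequence of elementary refinements; the reflexive–transitive closure of `ElemRef`. -/
def RTle (μ τ : Multiset (ℕ × ℕ)) : Prop :=
  Relation.ReflTransGen ElemRef τ μ

/- ### Auxiliary definitions and lemmas -/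

def Tau0 : Multiset (ℕ × ℕ) := {(1,1),(1,1),(1,1),(1,1)}
def Nu0 : Multiset (ℕ × ℕ) := {(2,1),(1,2)}
def tB0 : Multiset (ℕ × ℕ) := {(1,1),(1,1),(2,1)}
def tC0 : Multiset (ℕ × ℕ) := {(1,1),(1,1),(1,2)}

def alpha (τ : Multiset (ℕ × ℕ)) : Multiset (ℕ × ℕ) :=
  if τ = Tau0 then Nu0 else if τ = Nu0 then Tau0 else τ

lemma alpha_Tau0 : alpha Tau0 = Nu0 := by simp [alpha]
lemma alpha_Nu0 : alpha Nu0 = Tau0 := by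
  simp [alpha, show Nu0 ≠ Tau0 from by decide]
lemma alpha_other {τ : Multiset (ℕ × ℕ)} (h1 : τ ≠ Tau0) (h2 : τ ≠ Nu0) : alpha τ = τ := by
  simp [alpha, h1, h2]
lemma alpha_TC : alpha tC0 = tC0 :=
  alpha_other (by decide) (by decide)

lemma alpha_alpha (τ : Multiset (ℕ × ℕ)) : alpha (alpha τ) = τ := by
  by_cases h1 : τ = Tau0
  · rw [h1, alpha_Tau0, alpha_Nu0]
  by_cases h2 : τ = Nu0
  · rw [h2, alpha_Nu0, alpha_Tau0]
  · rw [alpha_other h1 h2, alpha_other h1 h2]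

lemma erase_of_cons_eq {x : ℕ × ℕ} {σ m : Multiset (ℕ × ℕ)} (h : m = x ::ₘ σ) :
    σ = m.erase x := by
  have := congrArg (fun s => s.erase x) h
  simp only [Multiset.erase_cons_head] at this
  exact this.symm

lemma ref_Nu0_TC : ElemRef Nu0 tC0 :=
  Or.inl ⟨{(1,2)}, 2, 1, 1, 1, one_pos, one_pos, rfl, by decide, by decide⟩

lemma ref_Tau0_TC : ElemRef Tau0 tC0 :=
  Or.inr ⟨{(1,1),(1,1)}, 1, 1, 1, by decide, by decide⟩

lemma ref_TB_Nu0 : ElemRef tB0 Nu0 :=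
  Or.inr ⟨{(2,1)}, 1, 1, 1, by decide, by decide⟩

lemma ref_TB_Tau0 : ElemRef tB0 Tau0 :=
  Or.inl ⟨{(1,1),(1,1)}, 2, 1, 1, 1, one_pos, one_pos, rfl, by decide, by decide⟩

/-- The only elementary refinement of `Tau0` is `tC0`. -/
lemma eA {c : Multiset (ℕ × ℕ)} (hr : ElemRef Tau0 c) : c = tC0 := by
  rcases hr with ⟨σ, d, e, a, b, ha, hb, hab, h1, h2⟩ | ⟨σ, d, e, e', h1, h2⟩
  · exfalso
    have hm : (d, e) ∈ Tau0 := by rw [h1]; exact Multiset.mem_cons_self _ _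
    simp [Tau0] at hm
    omega
  · have hm : (d, e) ∈ Tau0 := by rw [h1]; exact Multiset.mem_cons_self _ _
    simp [Tau0] at hm
    obtain ⟨hd, he⟩ := hm
    subst hd; subst he
    have h3 := erase_of_cons_eq h1
    rw [show Tau0.erase (1,1) = ({(1,1),(1,1),(1,1)} : Multiset (ℕ × ℕ)) from by decide] at h3
    have hm2 : ((1:ℕ), e') ∈ ({(1,1),(1,1),(1,1)} : Multiset (ℕ × ℕ)) := by
      rw [← h3]; exact Multiset.mem_cons_self _ _
    simp at hm2
    subst hm2
    have h4 := erase_of_cons_eq h3.symm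
    rw [show ({(1,1),(1,1),(1,1)} : Multiset (ℕ × ℕ)).erase (1,1) =
        ({(1,1),(1,1)} : Multiset (ℕ × ℕ)) from by decide] at h4
    rw [h2, h4]; decide

/-- The only elementary refinement of `Nu0` is `tC0`. -/
lemma eE {c : Multiset (ℕ × ℕ)} (hr : ElemRef Nu0 c) : c = tC0 := by
  rcases hr with ⟨σ, d, e, a, b, ha, hb, hab, h1, h2⟩ | ⟨σ, d, e, e', h1, h2⟩
  · have hm : (d, e) ∈ Nu0 := by rw [h1]; exact Multiset.mem_cons_self _ _
    simp [Nu0] at hm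
    rcases hm with ⟨hd, he⟩ | ⟨hd, he⟩
    · subst hd; subst he
      have h3 := erase_of_cons_eq h1
      rw [show Nu0.erase (2,1) = ({(1,2)} : Multiset (ℕ × ℕ)) from by decide] at h3
      have ha1 : a = 1 := by omega
      have hb1 : b = 1 := by omega
      rw [h2, h3, ha1, hb1]; decide
    · exfalso; omega
  · exfalso
    have hm : (d, e) ∈ Nu0 := by rw [h1]; exact Multiset.mem_cons_self _ _
    simp [Nu0] at hm
    rcases hm with ⟨hd, he⟩ | ⟨hd, he⟩
    · subst hd; subst he
      have h3 := erase_of_cons_eq h1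
      rw [show Nu0.erase (2,1) = ({(1,2)} : Multiset (ℕ × ℕ)) from by decide] at h3
      have hm2 : ((2:ℕ), e') ∈ ({(1,2)} : Multiset (ℕ × ℕ)) := by
        rw [← h3]; exact Multiset.mem_cons_self _ _
      simp at hm2
    · subst hd; subst he
      have h3 := erase_of_cons_eq h1
      rw [show Nu0.erase (1,2) = ({(2,1)} : Multiset (ℕ × ℕ)) from by decide] at h3
      have hm2 : ((1:ℕ), e') ∈ ({(2,1)} : Multiset (ℕ × ℕ)) := by
        rw [← h3]; exact Multiset.mem_cons_self _ _
      simp at hm2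

/-- The only `τ ∈ RT_4` with `ElemRef τ Tau0` is `tB0`. -/
lemma toA {b : Multiset (ℕ × ℕ)} (hpos : IsRT 4 b) (hr : ElemRef b Tau0) : b = tB0 := by
  rcases hr with ⟨σ, d, e, a, b', ha, hb, hab, h1, h2⟩ | ⟨σ, d, e, e', h1, h2⟩
  · have hm : (a, e) ∈ Tau0 := by rw [h2]; exact Multiset.mem_cons_self _ _
    simp [Tau0] at hm
    obtain ⟨ha1, he1⟩ := hm
    subst ha1; subst he1
    have h3 := erase_of_cons_eq h2
    rw [show Tau0.erase (1,1) = ({(1,1),(1,1),(1,1)} : Multiset (ℕ × ℕ)) from by decide] at h3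
    have hm2 : (b', (1:ℕ)) ∈ ({(1,1),(1,1),(1,1)} : Multiset (ℕ × ℕ)) := by
      rw [← h3]; exact Multiset.mem_cons_self _ _
    simp at hm2
    subst hm2
    have h4 := erase_of_cons_eq h3.symm
    rw [show ({(1,1),(1,1),(1,1)} : Multiset (ℕ × ℕ)).erase (1,1) =
        ({(1,1),(1,1)} : Multiset (ℕ × ℕ)) from by decide] at h4
    have hd2 : d = 2 := by omega
    rw [h1, h4, hd2]; decide
  · exfalso
    have hm : (d, e + e') ∈ Tau0 := by rw [h2]; exact Multiset.mem_cons_self _ _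
    simp [Tau0] at hm
    have pe : 0 < e := (hpos.1 (d, e) (by rw [h1]; exact Multiset.mem_cons_self _ _)).2
    have pe' : 0 < e' :=
      (hpos.1 (d, e') (by rw [h1]; exact Multiset.mem_cons_of_mem (Multiset.mem_cons_self _ _))).2
    omega

/-- The only `τ ∈ RT_4` with `ElemRef τ Nu0` is `tB0`. -/
lemma toE {b : Multiset (ℕ × ℕ)} (hpos : IsRT 4 b) (hr : ElemRef b Nu0) : b = tB0 := by
  rcases hr with ⟨σ, d, e, a, b', ha, hb, hab, h1, h2⟩ | ⟨σ, d, e, e', h1, h2⟩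
  · exfalso
    have hm : (a, e) ∈ Nu0 := by rw [h2]; exact Multiset.mem_cons_self _ _
    simp [Nu0] at hm
    rcases hm with ⟨ha1, he1⟩ | ⟨ha1, he1⟩
    · subst ha1; subst he1
      have h3 := erase_of_cons_eq h2
      rw [show Nu0.erase (2,1) = ({(1,2)} : Multiset (ℕ × ℕ)) from by decide] at h3
      have hm2 : (b', (1:ℕ)) ∈ ({(1,2)} : Multiset (ℕ × ℕ)) := by
        rw [← h3]; exact Multiset.mem_cons_self _ _
      simp at hm2
    · subst ha1; subst he1
      have h3 := erase_of_cons_eq h2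
      rw [show Nu0.erase (1,2) = ({(2,1)} : Multiset (ℕ × ℕ)) from by decide] at h3
      have hm2 : (b', (2:ℕ)) ∈ ({(2,1)} : Multiset (ℕ × ℕ)) := by
        rw [← h3]; exact Multiset.mem_cons_self _ _
      simp at hm2
  · have hm : (d, e + e') ∈ Nu0 := by rw [h2]; exact Multiset.mem_cons_self _ _
    simp [Nu0] at hm
    have pe : 0 < e := (hpos.1 (d, e) (by rw [h1]; exact Multiset.mem_cons_self _ _)).2
    have pe' : 0 < e' :=
      (hpos.1 (d, e') (by rw [h1]; exact Multiset.mem_cons_of_mem (Multiset.mem_cons_self _ _))).2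
    rcases hm with ⟨hd, he⟩ | ⟨hd, he⟩
    · exfalso; omega
    · subst hd
      have h3 := erase_of_cons_eq h2
      rw [show Nu0.erase (1, e + e') = Nu0.erase (1,2) from by rw [he]] at h3
      rw [show Nu0.erase (1,2) = ({(2,1)} : Multiset (ℕ × ℕ)) from by decide] at h3
      have he1 : e = 1 := by omega
      have he1' : e' = 1 := by omega
      rw [h1, h3, he1, he1']; decide

/-- Elementary refinements preserve `IsRT n`. -/
lemma IsRT_of_elemRef {n : ℕ} {τ τ' : Multiset (ℕ × ℕ)} (h : IsRT n τ) (hr : ElemRef τ τ') :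
    IsRT n τ' := by
  obtain ⟨hpos, hsum⟩ := h
  rcases hr with ⟨σ, d, e, a, b, ha, hb, hab, h1, h2⟩ | ⟨σ, d, e, e', h1, h2⟩
  · subst h1; subst h2
    have he : 0 < e := (hpos (d, e) (Multiset.mem_cons_self _ _)).2
    constructor
    · intro p hp
      rcases Multiset.mem_cons.mp hp with h | hp
      · subst h; exact ⟨ha, he⟩
      rcases Multiset.mem_cons.mp hp with h | hp
      · subst h; exact ⟨hb, he⟩
      · exact hpos p (Multiset.mem_cons_of_mem hp)
    · simp only [Multiset.map_cons, Multiset.sum_cons] at hsum ⊢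
      have : a * e + b * e = d * e := by rw [← hab, add_mul]
      linarith
  · subst h1; subst h2
    have he : 0 < e := (hpos (d, e) (Multiset.mem_cons_self _ _)).2
    have hd : 0 < d := (hpos (d, e) (Multiset.mem_cons_self _ _)).1
    constructor
    · intro p hp
      rcases Multiset.mem_cons.mp hp with h | hp
      · subst h; exact ⟨hd, by omega⟩
      · exact hpos p (Multiset.mem_cons_of_mem (Multiset.mem_cons_of_mem hp))
    · simp only [Multiset.map_cons, Multiset.sum_cons] at hsum ⊢
      have : d * (e + e') = d * e + d * e' := mul_add d e e'
      linarith

lemma IsRT_of_rtg {μ τ : Multiset (ℕ × ℕ)} (h : IsRT 4 μ)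
    (hr : Relation.ReflTransGen ElemRef μ τ) : IsRT 4 τ := by
  induction hr with
  | refl => exact h
  | tail _ h2 ih => exact IsRT_of_elemRef ih h2

/-- The key step: `alpha` preserves elementary refinements within `RT_4`. -/
lemma keyStep {b c : Multiset (ℕ × ℕ)} (hb : IsRT 4 b) (hr : ElemRef b c) :
    ElemRef (alpha b) (alpha c) := by
  by_cases hb1 : b = Tau0
  · subst hb1
    rw [eA hr, alpha_Tau0, alpha_TC]
    exact ref_Nu0_TC
  by_cases hb2 : b = Nu0
  · subst hb2
    rw [eE hr, alpha_Nu0, alpha_TC]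
    exact ref_Tau0_TC
  rw [alpha_other hb1 hb2]
  by_cases hc1 : c = Tau0
  · subst hc1
    rw [toA hb hr, alpha_Tau0]
    exact ref_TB_Nu0
  by_cases hc2 : c = Nu0
  · subst hc2
    rw [toE hb hr, alpha_Nu0]
    exact ref_TB_Tau0
  · rw [alpha_other hc1 hc2]
    exact hr

lemma mono {μ τ : Multiset (ℕ × ℕ)} (hμ : IsRT 4 μ)
    (hr : Relation.ReflTransGen ElemRef μ τ) :
    Relation.ReflTransGen ElemRef (alpha μ) (alpha τ) := by
  induction hr with
  | refl => exact Relation.ReflTransGen.refl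
  | tail h1 h2 ih => exact ih.tail (keyStep (IsRT_of_rtg hμ h1) h2)

lemma isRT_Tau0 : IsRT 4 Tau0 := by
  constructor
  · decide
  · decide

lemma isRT_Nu0 : IsRT 4 Nu0 := by
  constructor
  · decide
  · decide

lemma main1 : ∀ τ : Multiset (ℕ × ℕ), IsRT 4 τ → IsRT 4 (alpha τ) := by
  intro τ hτ
  by_cases h1 : τ = Tau0
  · rw [h1, alpha_Tau0]; exact isRT_Nu0
  by_cases h2 : τ = Nu0
  · rw [h2, alpha_Nu0]; exact isRT_Tau0
  · rwa [alpha_other h1 h2]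

lemma main2 : Set.BijOn alpha {τ | IsRT 4 τ} {τ | IsRT 4 τ} := by
  refine ⟨fun τ hτ => main1 τ hτ, ?_, ?_⟩
  · intro a _ b _ h
    have := congrArg alpha h
    rwa [alpha_alpha, alpha_alpha] at this
  · intro τ hτ
    exact ⟨alpha τ, main1 τ hτ, alpha_alpha τ⟩

lemma main3 : ∀ τ μ : Multiset (ℕ × ℕ), IsRT 4 τ → IsRT 4 μ →
    (RTle τ μ ↔ RTle (alpha τ) (alpha μ)) := by
  intro τ μ hτ hμ
  constructor
  · intro h
    exact mono hμ h
  · intro h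
    have := mono (main1 μ hμ) h
    rwa [alpha_alpha, alpha_alpha] at this


/-- The permutation of `RT_4` interchanging `[(1,1),(1,1),(1,1),(1,1)]` and
`[(2,1),(1,2)]` and fixing every other element is a nontrivial automorphism of the
partially ordered set `(RT_4, ⪯)`. -/
theorem luna_stmt15 :
    (∀ τ : Multiset (ℕ × ℕ), IsRT 4 τ → IsRT 4
      (if τ = ({(1, 1), (1, 1), (1, 1), (1, 1)} : Multiset (ℕ × ℕ)) then
        ({(2, 1), (1, 2)} : Multiset (ℕ × ℕ))
      else if τ = ({(2, 1), (1, 2)} : Multiset (ℕ × ℕ)) then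
        ({(1, 1), (1, 1), (1, 1), (1, 1)} : Multiset (ℕ × ℕ))
      else τ)) ∧
    Set.BijOn
      (fun τ : Multiset (ℕ × ℕ) =>
        if τ = ({(1, 1), (1, 1), (1, 1), (1, 1)} : Multiset (ℕ × ℕ)) then
          ({(2, 1), (1, 2)} : Multiset (ℕ × ℕ))
        else if τ = ({(2, 1), (1, 2)} : Multiset (ℕ × ℕ)) then
          ({(1, 1), (1, 1), (1, 1), (1, 1)} : Multiset (ℕ × ℕ))
        else τ)
      {τ | IsRT 4 τ} {τ | IsRT 4 τ} ∧
    (∀ τ μ : Multiset (ℕ × ℕ), IsRT 4 τ → IsRT 4 μ →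
      (RTle τ μ ↔ RTle
        (if τ = ({(1, 1), (1, 1), (1, 1), (1, 1)} : Multiset (ℕ × ℕ)) then
          ({(2, 1), (1, 2)} : Multiset (ℕ × ℕ))
        else if τ = ({(2, 1), (1, 2)} : Multiset (ℕ × ℕ)) then
          ({(1, 1), (1, 1), (1, 1), (1, 1)} : Multiset (ℕ × ℕ))
        else τ)
        (if μ = ({(1, 1), (1, 1), (1, 1), (1, 1)} : Multiset (ℕ × ℕ)) then
          ({(2, 1), (1, 2)} : Multiset (ℕ × ℕ))
        else if μ = ({(2, 1), (1, 2)} : Multiset (ℕ × ℕ)) then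
          ({(1, 1), (1, 1), (1, 1), (1, 1)} : Multiset (ℕ × ℕ))
        else μ))) ∧
    ({(2, 1), (1, 2)} : Multiset (ℕ × ℕ)) ≠
      ({(1, 1), (1, 1), (1, 1), (1, 1)} : Multiset (ℕ × ℕ)) := by
  exact ⟨main1, main2, main3, by decide⟩
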